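/- (Royden's lemma, algebraic form, as used in (3.4) of Proposition 3.3.) Let n ≥ 1 and let R : ℂⁿ × ℂⁿ × ℂⁿ × ℂⁿ → ℂ be a map that is ℂ-linear in the first and third arguments, conjugate-linear in the second and fourth arguments, and satisfies the Kähler curvature symmetries R(ξ, η, ζ, ω) = R(ζ, η, ξ, ω) = R(ξ, ω, ζ, η) together with the reality condition R(ξ, η, ζ, ω) = conj(R(η, ξ, ω, ζ)). Let κ ≥ 0 be a real number and suppose the holomorphic sectional curvature bound R(η, η, η, η) ≤ −κ‖η‖⁴ holds for every η ∈ ℂⁿ (the left side being real by the reality condition, and ‖·‖ the standard Hermitian norm on ℂⁿ). Then for all positive real numbers b_1, …, b_n, writing e_1, …, e_n for the standard basis of ℂⁿ and S = ∑_{i=1}^n 1/b_i, one has −∑_{i,k=1}^n Re R(e_i, e_i, e_k, e_k)/(b_i b_k) ≥ ((n+1)κ/(2n)) · S². -/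

import Mathlib

open Finset

section RoydenAux
variable {n : ℕ}
variable (R : EuclideanSpace ℂ (Fin n) → EuclideanSpace ℂ (Fin n) → EuclideanSpace ℂ (Fin n) →
      EuclideanSpace ℂ (Fin n) → ℂ)

theorem royden_zero1
    (hlin1 : ∀ (a : ℂ) (ξ ξ' η ζ w), R (a • ξ + ξ') η ζ w = a * R ξ η ζ w + R ξ' η ζ w)
    (η ζ w : EuclideanSpace ℂ (Fin n)) : R 0 η ζ w = 0 := by
  have h := hlin1 1 0 0 η ζ w
  simp only [one_smul, add_zero, one_mul] at h
  exact (left_eq_add.mp h)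

theorem royden_sum_smul1
    (hlin1 : ∀ (a : ℂ) (ξ ξ' η ζ w), R (a • ξ + ξ') η ζ w = a * R ξ η ζ w + R ξ' η ζ w)
    (s : Finset (Fin n)) (c : Fin n → ℂ) (v : Fin n → EuclideanSpace ℂ (Fin n))
    (η ζ w : EuclideanSpace ℂ (Fin n)) :
    R (∑ i ∈ s, c i • v i) η ζ w = ∑ i ∈ s, c i * R (v i) η ζ w := by
  induction s using Finset.cons_induction with
  | empty => simp [royden_zero1 R hlin1]
  | cons a s ha ih =>
      rw [Finset.sum_cons, Finset.sum_cons, ← ih, hlin1]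

theorem royden_zero2
    (hconj2 : ∀ (a : ℂ) (ξ η η' ζ w),
      R ξ (a • η + η') ζ w = (starRingEnd ℂ) a * R ξ η ζ w + R ξ η' ζ w)
    (ξ ζ w : EuclideanSpace ℂ (Fin n)) : R ξ 0 ζ w = 0 := by
  have h := hconj2 1 ξ 0 0 ζ w
  simp only [one_smul, add_zero, map_one, one_mul] at h
  exact (left_eq_add.mp h)

theorem royden_sum_smul2
    (hconj2 : ∀ (a : ℂ) (ξ η η' ζ w),
      R ξ (a • η + η') ζ w = (starRingEnd ℂ) a * R ξ η ζ w + R ξ η' ζ w)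
    (s : Finset (Fin n)) (c : Fin n → ℂ) (v : Fin n → EuclideanSpace ℂ (Fin n))
    (ξ ζ w : EuclideanSpace ℂ (Fin n)) :
    R ξ (∑ i ∈ s, c i • v i) ζ w = ∑ i ∈ s, (starRingEnd ℂ) (c i) * R ξ (v i) ζ w := by
  induction s using Finset.cons_induction with
  | empty => simp [royden_zero2 R hconj2]
  | cons a s ha ih =>
      rw [Finset.sum_cons, Finset.sum_cons, ← ih, hconj2]

theorem royden_zero3
    (hlin3 : ∀ (a : ℂ) (ξ η ζ ζ' w), R ξ η (a • ζ + ζ') w = a * R ξ η ζ w + R ξ η ζ' w)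
    (ξ η w : EuclideanSpace ℂ (Fin n)) : R ξ η 0 w = 0 := by
  have h := hlin3 1 ξ η 0 0 w
  simp only [one_smul, add_zero, one_mul] at h
  exact (left_eq_add.mp h)

theorem royden_sum_smul3
    (hlin3 : ∀ (a : ℂ) (ξ η ζ ζ' w), R ξ η (a • ζ + ζ') w = a * R ξ η ζ w + R ξ η ζ' w)
    (s : Finset (Fin n)) (c : Fin n → ℂ) (v : Fin n → EuclideanSpace ℂ (Fin n))
    (ξ η w : EuclideanSpace ℂ (Fin n)) :
    R ξ η (∑ i ∈ s, c i • v i) w = ∑ i ∈ s, c i * R ξ η (v i) w := by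
  induction s using Finset.cons_induction with
  | empty => simp [royden_zero3 R hlin3]
  | cons a s ha ih =>
      rw [Finset.sum_cons, Finset.sum_cons, ← ih, hlin3]

theorem royden_zero4
    (hconj4 : ∀ (a : ℂ) (ξ η ζ w w'),
      R ξ η ζ (a • w + w') = (starRingEnd ℂ) a * R ξ η ζ w + R ξ η ζ w')
    (ξ η ζ : EuclideanSpace ℂ (Fin n)) : R ξ η ζ 0 = 0 := by
  have h := hconj4 1 ξ η ζ 0 0
  simp only [one_smul, add_zero, map_one, one_mul] at h
  exact (left_eq_add.mp h)

theorem royden_sum_smul4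
    (hconj4 : ∀ (a : ℂ) (ξ η ζ w w'),
      R ξ η ζ (a • w + w') = (starRingEnd ℂ) a * R ξ η ζ w + R ξ η ζ w')
    (s : Finset (Fin n)) (c : Fin n → ℂ) (v : Fin n → EuclideanSpace ℂ (Fin n))
    (ξ η ζ : EuclideanSpace ℂ (Fin n)) :
    R ξ η ζ (∑ i ∈ s, c i • v i) = ∑ i ∈ s, (starRingEnd ℂ) (c i) * R ξ η ζ (v i) := by
  induction s using Finset.cons_induction with
  | empty => simp [royden_zero4 R hconj4]
  | cons a s ha ih =>
      rw [Finset.sum_cons, Finset.sum_cons, ← ih, hconj4]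

theorem royden_expand
    (hlin1 : ∀ (a : ℂ) (ξ ξ' η ζ w), R (a • ξ + ξ') η ζ w = a * R ξ η ζ w + R ξ' η ζ w)
    (hlin3 : ∀ (a : ℂ) (ξ η ζ ζ' w), R ξ η (a • ζ + ζ') w = a * R ξ η ζ w + R ξ η ζ' w)
    (hconj2 : ∀ (a : ℂ) (ξ η η' ζ w),
      R ξ (a • η + η') ζ w = (starRingEnd ℂ) a * R ξ η ζ w + R ξ η' ζ w)
    (hconj4 : ∀ (a : ℂ) (ξ η ζ w w'),
      R ξ η ζ (a • w + w') = (starRingEnd ℂ) a * R ξ η ζ w + R ξ η ζ w')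
    (c : Fin n → ℂ) (v : Fin n → EuclideanSpace ℂ (Fin n)) :
    R (∑ i, c i • v i) (∑ i, c i • v i) (∑ i, c i • v i) (∑ i, c i • v i)
    = ∑ i, ∑ j, ∑ k, ∑ l,
        (c i * (starRingEnd ℂ) (c j) * (c k * (starRingEnd ℂ) (c l)))
          * R (v i) (v j) (v k) (v l) := by
  simp only [royden_sum_smul1 R hlin1, royden_sum_smul2 R hconj2, royden_sum_smul3 R hlin3,
    royden_sum_smul4 R hconj4, Finset.mul_sum]
  exact Finset.sum_congr rfl fun i _ => Finset.sum_congr rfl fun j _ =>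
    Finset.sum_congr rfl fun k _ => Finset.sum_congr rfl fun l _ => by ring

end RoydenAux
open Finset

noncomputable def ω4 : Fin 4 → ℂ := ![1, Complex.I, -1, -Complex.I]

theorem ω4_norm (t : Fin 4) : ‖ω4 t‖ = 1 := by
  fin_cases t <;> simp [ω4]

theorem ω4_pow_sum (a b : ℕ) (ha : a ≤ 2) (hb : b ≤ 2) :
    ∑ t : Fin 4, ω4 t ^ a * (starRingEnd ℂ) (ω4 t) ^ b = if a = b then 4 else 0 := by
  interval_cases a <;> interval_cases b <;>
    norm_num [Fin.sum_univ_four, ω4, Complex.ext_iff, Matrix.cons_val_two, Matrix.cons_val_three]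

theorem royden_pointwise {n : ℕ} (i j k l m : Fin n) (t : Fin 4) :
    (if m = i then ω4 t else 1) * (if m = j then (starRingEnd ℂ) (ω4 t) else 1) *
        ((if m = k then ω4 t else 1) * (if m = l then (starRingEnd ℂ) (ω4 t) else 1))
    = ω4 t ^ (((if m = i then 1 else 0) + (if m = k then 1 else 0) : ℕ))
      * (starRingEnd ℂ) (ω4 t) ^ (((if m = j then 1 else 0) + (if m = l then 1 else 0) : ℕ)) := by
  split_ifs <;> ring

theorem royden_gsum {n : ℕ} (i j k l m : Fin n) :
    (∑ t : Fin 4, (if m = i then ω4 t else 1) * (if m = j then (starRingEnd ℂ) (ω4 t) else 1) *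
        ((if m = k then ω4 t else 1) * (if m = l then (starRingEnd ℂ) (ω4 t) else 1)))
    = if (((if m = i then 1 else 0) + (if m = k then 1 else 0) : ℕ)
        = ((if m = j then 1 else 0) + (if m = l then 1 else 0))) then 4 else 0 := by
  simp only [royden_pointwise i j k l m]
  exact ω4_pow_sum _ _ (by split_ifs <;> norm_num) (by split_ifs <;> norm_num)
open Finset

theorem royden_prod_decomp {n : ℕ} (i j k l : Fin n) (θ : Fin n → Fin 4) :
    ω4 (θ i) * (starRingEnd ℂ) (ω4 (θ j)) * (ω4 (θ k) * (starRingEnd ℂ) (ω4 (θ l)))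
    = ∏ m, ((if m = i then ω4 (θ m) else 1) * (if m = j then (starRingEnd ℂ) (ω4 (θ m)) else 1) *
        ((if m = k then ω4 (θ m) else 1) * (if m = l then (starRingEnd ℂ) (ω4 (θ m)) else 1))) := by
  simp only [Finset.prod_mul_distrib]
  simp [Finset.prod_ite_eq', Finset.mem_univ]

theorem royden_orthog {n : ℕ} (i j k l : Fin n) :
    (∑ θ : Fin n → Fin 4, ω4 (θ i) * (starRingEnd ℂ) (ω4 (θ j)) *
        (ω4 (θ k) * (starRingEnd ℂ) (ω4 (θ l))))
    = (4 : ℂ) ^ n * ((if i = j ∧ k = l then 1 else 0) + (if i = l ∧ k = j then 1 else 0)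
        - (if i = j ∧ k = l ∧ i = l then 1 else 0)) := by
  have hfac : (∑ θ : Fin n → Fin 4, ω4 (θ i) * (starRingEnd ℂ) (ω4 (θ j)) *
        (ω4 (θ k) * (starRingEnd ℂ) (ω4 (θ l))))
      = ∏ m, (if (((if m = i then 1 else 0) + (if m = k then 1 else 0) : ℕ)
          = ((if m = j then 1 else 0) + (if m = l then 1 else 0))) then (4:ℂ) else 0) := by
    have hswap := Finset.sum_prod_piFinset (univ : Finset (Fin 4))
      (fun m t => (if m = i then ω4 t else 1) * (if m = j then (starRingEnd ℂ) (ω4 t) else 1) *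
        ((if m = k then ω4 t else 1) * (if m = l then (starRingEnd ℂ) (ω4 t) else 1)))
    rw [Fintype.piFinset_univ] at hswap
    calc (∑ θ : Fin n → Fin 4, ω4 (θ i) * (starRingEnd ℂ) (ω4 (θ j)) *
            (ω4 (θ k) * (starRingEnd ℂ) (ω4 (θ l))))
        = ∑ θ : Fin n → Fin 4, ∏ m,
            ((if m = i then ω4 (θ m) else 1) * (if m = j then (starRingEnd ℂ) (ω4 (θ m)) else 1) *
            ((if m = k then ω4 (θ m) else 1) *
              (if m = l then (starRingEnd ℂ) (ω4 (θ m)) else 1))) :=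
          Finset.sum_congr rfl fun θ _ => royden_prod_decomp i j k l θ
      _ = ∏ m, ∑ t : Fin 4,
            ((if m = i then ω4 t else 1) * (if m = j then (starRingEnd ℂ) (ω4 t) else 1) *
            ((if m = k then ω4 t else 1) * (if m = l then (starRingEnd ℂ) (ω4 t) else 1))) := hswap
      _ = ∏ m, (if (((if m = i then 1 else 0) + (if m = k then 1 else 0) : ℕ)
          = ((if m = j then 1 else 0) + (if m = l then 1 else 0))) then (4:ℂ) else 0) :=
          Finset.prod_congr rfl fun m _ => royden_gsum i j k l m
  rw [hfac]
  have hfour : (∀ m : Fin n, (((if m = i then 1 else 0) + (if m = k then 1 else 0) : ℕ)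
      = ((if m = j then 1 else 0) + (if m = l then 1 else 0)))) →
      (∏ m : Fin n, (if (((if m = i then 1 else 0) + (if m = k then 1 else 0) : ℕ)
          = ((if m = j then 1 else 0) + (if m = l then 1 else 0))) then (4:ℂ) else 0))
        = (4:ℂ) ^ n := by
    intro h
    rw [Finset.prod_congr rfl fun m _ => if_pos (h m)]
    simp
  have hzero : ∀ m : Fin n, ¬ (((if m = i then 1 else 0) + (if m = k then 1 else 0) : ℕ)
      = ((if m = j then 1 else 0) + (if m = l then 1 else 0))) →
      (∏ m : Fin n, (if (((if m = i then 1 else 0) + (if m = k then 1 else 0) : ℕ)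
          = ((if m = j then 1 else 0) + (if m = l then 1 else 0))) then (4:ℂ) else 0)) = 0 :=
    fun m hm => Finset.prod_eq_zero (Finset.mem_univ m) (if_neg hm)
  by_cases hij : i = j <;> by_cases hkl : k = l <;> by_cases hil : i = l <;> by_cases hkj : k = j
  · rw [hfour (fun m => by simp [← hij, ← hkl]),
      if_pos ⟨hij, hkl⟩, if_pos ⟨hil, hkj⟩, if_pos ⟨hij, hkl, hil⟩]; ring
  · exact absurd (hkl.trans (hil.symm.trans hij)) hkj
  · exact absurd (hij.trans (hkj.symm.trans hkl)) hil
  · rw [hfour (fun m => by simp [← hij, ← hkl]),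
      if_pos ⟨hij, hkl⟩, if_neg (fun h => hil h.1), if_neg (fun h => hil h.2.2)]; ring
  · exact absurd (hkj.trans (hij.symm.trans hil)) hkl
  · -- i=j, ¬kl, il, ¬kj : witness k
    rw [hzero k (by simp [hkj, hkl]; first | done | (split_ifs <;> omega)),
      if_neg (fun h => hkl h.2), if_neg (fun h => hkj h.2), if_neg (fun h => hkl h.2.1)]; ring
  · -- i=j, ¬kl, ¬il, kj : witness i (i = k)
    have hik : i = k := hij.trans hkj.symm
    rw [hzero i (by
        have hjl : ¬ j = l := fun h => hil (hij.trans h)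
        simp [hij, ← hik, hjl]),
      if_neg (fun h => hkl h.2), if_neg (fun h => hil h.1), if_neg (fun h => hkl h.2.1)]; ring
  · -- i=j only : witness k
    rw [hzero k (by simp [hkj, hkl]; first | done | (split_ifs <;> omega)),
      if_neg (fun h => hkl h.2), if_neg (fun h => hil h.1), if_neg (fun h => hkl h.2.1)]; ring
  · exact absurd (hil.trans (hkl.symm.trans hkj)) hij
  · -- ¬ij, kl, il, ¬kj : witness i (i = k)
    have hik : i = k := hil.trans hkl.symm
    rw [hzero i (by
        have hlj : ¬ l = j := fun h => hij (hil.trans h)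
        simp [hil, ← hik, hlj]),
      if_neg (fun h => hij h.1), if_neg (fun h => hkj h.2), if_neg (fun h => hij h.1)]; ring
  · rw [hzero i (by simp [hij, hil]; first | done | (split_ifs <;> omega)),
      if_neg (fun h => hij h.1), if_neg (fun h => hil h.1), if_neg (fun h => hij h.1)]; ring
  · rw [hzero i (by simp [hij, hil]; first | done | (split_ifs <;> omega)),
      if_neg (fun h => hij h.1), if_neg (fun h => hil h.1), if_neg (fun h => hij h.1)]; ring
  · -- ¬ij, ¬kl, il, kj
    rw [hfour (fun m => by simp only [← hil, ← hkj]; omega),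
      if_neg (fun h => hij h.1), if_pos ⟨hil, hkj⟩, if_neg (fun h => hij h.1)]; ring
  · rw [hzero k (by simp [hkj, hkl]; first | done | (split_ifs <;> omega)),
      if_neg (fun h => hij h.1), if_neg (fun h => hkj h.2), if_neg (fun h => hij h.1)]; ring
  · rw [hzero i (by simp [hij, hil]; first | done | (split_ifs <;> omega)),
      if_neg (fun h => hij h.1), if_neg (fun h => hil h.1), if_neg (fun h => hij h.1)]; ring
  · rw [hzero i (by simp [hij, hil]; first | done | (split_ifs <;> omega)),
      if_neg (fun h => hij h.1), if_neg (fun h => hil h.1), if_neg (fun h => hij h.1)]; ring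
open Finset

section
variable {n : ℕ}

theorem royden_collapse1 (f : Fin n → Fin n → Fin n → Fin n → ℂ) :
    (∑ i, ∑ j, ∑ k, ∑ l, if k = l then (if i = j then f i j k l else 0) else 0)
    = ∑ i, ∑ k, f i i k k := by
  have h1 : ∀ i j k : Fin n,
      (∑ l, if k = l then (if i = j then f i j k l else 0) else 0)
      = if i = j then f i j k k else 0 := by
    intro i j k; rw [Finset.sum_ite_eq]; simp
  simp only [h1]
  have h2 : ∀ i j : Fin n, (∑ k, if i = j then f i j k k else 0)
      = if i = j then ∑ k, f i j k k else 0 := by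
    intro i j; split_ifs <;> simp
  simp only [h2]
  refine Finset.sum_congr rfl fun i _ => ?_
  rw [Finset.sum_ite_eq]; simp

theorem royden_collapse2 (f : Fin n → Fin n → Fin n → Fin n → ℂ) :
    (∑ i, ∑ j, ∑ k, ∑ l, if i = l then (if k = j then f i j k l else 0) else 0)
    = ∑ i, ∑ k, f i k k i := by
  have h1 : ∀ i j k : Fin n,
      (∑ l, if i = l then (if k = j then f i j k l else 0) else 0)
      = if k = j then f i j k i else 0 := by
    intro i j k; rw [Finset.sum_ite_eq]; simp
  simp only [h1]
  have h2 : ∀ i j : Fin n, (∑ k, if k = j then f i j k i else 0) = f i j j i := by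
    intro i j; rw [Finset.sum_ite_eq']; simp
  simp only [h2]

theorem royden_collapse3 (f : Fin n → Fin n → Fin n → Fin n → ℂ) :
    (∑ i, ∑ j, ∑ k, ∑ l, if k = l then (if i = l then (if i = j then f i j k l else 0) else 0) else 0)
    = ∑ i, f i i i i := by
  have h1 : ∀ i j k : Fin n,
      (∑ l, if k = l then (if i = l then (if i = j then f i j k l else 0) else 0) else 0)
      = if i = k then (if i = j then f i j k k else 0) else 0 := by
    intro i j k; rw [Finset.sum_ite_eq]; simp
  simp only [h1]
  have h2 : ∀ i j : Fin n, (∑ k, if i = k then (if i = j then f i j k k else 0) else 0)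
      = if i = j then f i j i i else 0 := by
    intro i j; rw [Finset.sum_ite_eq]; simp
  simp only [h2]
  refine Finset.sum_congr rfl fun i _ => ?_
  rw [Finset.sum_ite_eq]; simp
end

theorem ite_nest2 (P Q : Prop) [Decidable P] [Decidable Q] (x : ℂ) :
    (if P ∧ Q then x else 0) = if Q then (if P then x else 0) else 0 := by
  split_ifs <;> first | rfl | tauto

theorem ite_nest2' (P Q : Prop) [Decidable P] [Decidable Q] (x : ℂ) :
    (if P ∧ Q then x else 0) = if P then (if Q then x else 0) else 0 := by
  split_ifs <;> first | rfl | tauto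

theorem ite_nest3 (P Q S : Prop) [Decidable P] [Decidable Q] [Decidable S] (x : ℂ) :
    (if P ∧ Q ∧ S then x else 0) = if Q then (if S then (if P then x else 0) else 0) else 0 := by
  split_ifs <;> first | rfl | tauto

section
variable {n : ℕ}
  (R : EuclideanSpace ℂ (Fin n) → EuclideanSpace ℂ (Fin n) → EuclideanSpace ℂ (Fin n) →
      EuclideanSpace ℂ (Fin n) → ℂ)

theorem royden_key
    (hlin1 : ∀ (a : ℂ) (ξ ξ' η ζ w), R (a • ξ + ξ') η ζ w = a * R ξ η ζ w + R ξ' η ζ w)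
    (hlin3 : ∀ (a : ℂ) (ξ η ζ ζ' w), R ξ η (a • ζ + ζ') w = a * R ξ η ζ w + R ξ η ζ' w)
    (hconj2 : ∀ (a : ℂ) (ξ η η' ζ w),
      R ξ (a • η + η') ζ w = (starRingEnd ℂ) a * R ξ η ζ w + R ξ η' ζ w)
    (hconj4 : ∀ (a : ℂ) (ξ η ζ w w'),
      R ξ η ζ (a • w + w') = (starRingEnd ℂ) a * R ξ η ζ w + R ξ η ζ w')
    (hsym13 : ∀ ξ η ζ w, R ξ η ζ w = R ζ η ξ w)
    (a : Fin n → ℝ) (v : Fin n → EuclideanSpace ℂ (Fin n)) :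
    (∑ θ : Fin n → Fin 4, R (∑ i, (((a i : ℂ)) * ω4 (θ i)) • v i)
        (∑ i, (((a i : ℂ)) * ω4 (θ i)) • v i) (∑ i, (((a i : ℂ)) * ω4 (θ i)) • v i)
        (∑ i, (((a i : ℂ)) * ω4 (θ i)) • v i))
    = (4 : ℂ) ^ n * (2 * ∑ i, ∑ k, ((a i ^ 2 * a k ^ 2 : ℝ) : ℂ) * R (v i) (v i) (v k) (v k)
        - ∑ i, ((a i ^ 4 : ℝ) : ℂ) * R (v i) (v i) (v i) (v i)) := by
  -- expand each summand
  have hexp : ∀ θ : Fin n → Fin 4, R (∑ i, (((a i : ℂ)) * ω4 (θ i)) • v i)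
        (∑ i, (((a i : ℂ)) * ω4 (θ i)) • v i) (∑ i, (((a i : ℂ)) * ω4 (θ i)) • v i)
        (∑ i, (((a i : ℂ)) * ω4 (θ i)) • v i)
      = ∑ i, ∑ j, ∑ k, ∑ l, ((a i * a j * (a k * a l) : ℝ) : ℂ)
          * (ω4 (θ i) * (starRingEnd ℂ) (ω4 (θ j)) * (ω4 (θ k) * (starRingEnd ℂ) (ω4 (θ l))))
          * R (v i) (v j) (v k) (v l) := by
    intro θ
    rw [royden_expand R hlin1 hlin3 hconj2 hconj4 (fun i => (a i : ℂ) * ω4 (θ i)) v]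
    refine Finset.sum_congr rfl fun i _ => Finset.sum_congr rfl fun j _ =>
      Finset.sum_congr rfl fun k _ => Finset.sum_congr rfl fun l _ => ?_
    simp only [map_mul, Complex.conj_ofReal]
    push_cast
    ring
  rw [Finset.sum_congr rfl fun θ _ => hexp θ]
  -- swap the θ-sum inside
  rw [Finset.sum_comm]
  rw [Finset.sum_congr rfl fun i _ => Finset.sum_comm]
  rw [Finset.sum_congr rfl fun i _ => Finset.sum_congr rfl fun j _ => Finset.sum_comm]
  rw [Finset.sum_congr rfl fun i _ => Finset.sum_congr rfl fun j _ =>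
    Finset.sum_congr rfl fun k _ => Finset.sum_comm]
  -- evaluate the inner θ-sums via orthogonality
  have hinner : ∀ i j k l : Fin n,
      (∑ θ : Fin n → Fin 4, ((a i * a j * (a k * a l) : ℝ) : ℂ)
          * (ω4 (θ i) * (starRingEnd ℂ) (ω4 (θ j)) * (ω4 (θ k) * (starRingEnd ℂ) (ω4 (θ l))))
          * R (v i) (v j) (v k) (v l))
      = (4 : ℂ) ^ n *
          ((if k = l then (if i = j then ((a i * a j * (a k * a l) : ℝ) : ℂ)
              * R (v i) (v j) (v k) (v l) else 0) else 0)
          + (if i = l then (if k = j then ((a i * a j * (a k * a l) : ℝ) : ℂ)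
              * R (v i) (v j) (v k) (v l) else 0) else 0)
          - (if k = l then (if i = l then (if i = j then ((a i * a j * (a k * a l) : ℝ) : ℂ)
              * R (v i) (v j) (v k) (v l) else 0) else 0) else 0)) := by
    intro i j k l
    have : (∑ θ : Fin n → Fin 4, ((a i * a j * (a k * a l) : ℝ) : ℂ)
          * (ω4 (θ i) * (starRingEnd ℂ) (ω4 (θ j)) * (ω4 (θ k) * (starRingEnd ℂ) (ω4 (θ l))))
          * R (v i) (v j) (v k) (v l))
        = ((a i * a j * (a k * a l) : ℝ) : ℂ) * R (v i) (v j) (v k) (v l) *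
            (∑ θ : Fin n → Fin 4, ω4 (θ i) * (starRingEnd ℂ) (ω4 (θ j)) *
              (ω4 (θ k) * (starRingEnd ℂ) (ω4 (θ l)))) := by
      rw [Finset.mul_sum]
      exact Finset.sum_congr rfl fun θ _ => by ring
    rw [this, royden_orthog i j k l,
      ite_nest3 (i = j) (k = l) (i = l) (1:ℂ),
      ite_nest2 (i = j) (k = l) (1:ℂ), ite_nest2' (i = l) (k = j) (1:ℂ)]
    split_ifs <;> ring
  rw [Finset.sum_congr rfl fun i _ => Finset.sum_congr rfl fun j _ =>
    Finset.sum_congr rfl fun k _ => Finset.sum_congr rfl fun l _ => hinner i j k l]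
  -- split into the three collapsed sums
  simp only [mul_add, mul_sub, Finset.sum_add_distrib, Finset.sum_sub_distrib,
    ← Finset.mul_sum]
  rw [royden_collapse1 (fun i j k l => ((a i * a j * (a k * a l) : ℝ) : ℂ) * R (v i) (v j) (v k) (v l)),
    royden_collapse2 (fun i j k l => ((a i * a j * (a k * a l) : ℝ) : ℂ) * R (v i) (v j) (v k) (v l)),
    royden_collapse3 (fun i j k l => ((a i * a j * (a k * a l) : ℝ) : ℂ) * R (v i) (v j) (v k) (v l))]
  -- identify the two off-diagonal sums using the symmetry
  have hs : (∑ i, ∑ k, ((a i * a k * (a k * a i) : ℝ) : ℂ) * R (v i) (v k) (v k) (v i))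
      = ∑ i, ∑ k, ((a i * a i * (a k * a k) : ℝ) : ℂ) * R (v i) (v i) (v k) (v k) := by
    rw [Finset.sum_comm]
    refine Finset.sum_congr rfl fun k _ => Finset.sum_congr rfl fun i _ => ?_
    rw [hsym13 (v i) (v k) (v k) (v i)]
    push_cast; ring_nf
  rw [hs]
  have h1 : (∑ i, ∑ k, ((a i * a i * (a k * a k) : ℝ) : ℂ) * R (v i) (v i) (v k) (v k))
      = ∑ i, ∑ k, ((a i ^ 2 * a k ^ 2 : ℝ) : ℂ) * R (v i) (v i) (v k) (v k) := by
    refine Finset.sum_congr rfl fun i _ => Finset.sum_congr rfl fun k _ => ?_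
    push_cast; ring
  have h2 : (∑ i, ((a i * a i * (a i * a i) : ℝ) : ℂ) * R (v i) (v i) (v i) (v i))
      = ∑ i, ((a i ^ 4 : ℝ) : ℂ) * R (v i) (v i) (v i) (v i) := by
    refine Finset.sum_congr rfl fun i _ => ?_
    push_cast; ring
  rw [h1, h2]
  ring
end

theorem euclidean_sum_apply {n : ℕ} (g : Fin n → EuclideanSpace ℂ (Fin n)) (j : Fin n) :
    (∑ i, g i) j = ∑ i, g i j := by
  classical
  have h : ∀ (s : Finset (Fin n)), (∑ i ∈ s, g i) j = ∑ i ∈ s, g i j := by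
    intro s
    induction s using Finset.cons_induction with
    | empty => rfl
    | cons a s ha ih => rw [Finset.sum_cons, Finset.sum_cons, ← ih]; rfl
  exact h Finset.univ



/-- Royden's lemma, algebraic form. Let `R` be a quadrilinear map on `ℂⁿ` (ℂ-linear in the
1st and 3rd slots, conjugate-linear in the 2nd and 4th) satisfying the Kähler curvature
symmetries `R(ξ,η,ζ,ω) = R(ζ,η,ξ,ω) = R(ξ,ω,ζ,η)` and the reality condition
`R(ξ,η,ζ,ω) = conj R(η,ξ,ω,ζ)`. If `R(η,η,η,η) ≤ -κ‖η‖⁴` for all `η` (with `κ ≥ 0`),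
then for positive reals `b i`, with `S = ∑ 1/b i`,
`-∑_{i,k} Re R(e_i,e_i,e_k,e_k)/(b_i b_k) ≥ ((n+1)κ/(2n)) S²`. -/
theorem royden_lemma (n : ℕ) (hn : 1 ≤ n)
    (R : EuclideanSpace ℂ (Fin n) → EuclideanSpace ℂ (Fin n) → EuclideanSpace ℂ (Fin n) →
      EuclideanSpace ℂ (Fin n) → ℂ)
    (hlin1 : ∀ (a : ℂ) (ξ ξ' η ζ w), R (a • ξ + ξ') η ζ w = a * R ξ η ζ w + R ξ' η ζ w)
    (hlin3 : ∀ (a : ℂ) (ξ η ζ ζ' w), R ξ η (a • ζ + ζ') w = a * R ξ η ζ w + R ξ η ζ' w)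
    (hconj2 : ∀ (a : ℂ) (ξ η η' ζ w),
      R ξ (a • η + η') ζ w = (starRingEnd ℂ) a * R ξ η ζ w + R ξ η' ζ w)
    (hconj4 : ∀ (a : ℂ) (ξ η ζ w w'),
      R ξ η ζ (a • w + w') = (starRingEnd ℂ) a * R ξ η ζ w + R ξ η ζ w')
    (hsym13 : ∀ ξ η ζ w, R ξ η ζ w = R ζ η ξ w)
    (hsym24 : ∀ ξ η ζ w, R ξ η ζ w = R ξ w ζ η)
    (hreal : ∀ ξ η ζ w, R ξ η ζ w = (starRingEnd ℂ) (R η ξ w ζ))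
    (κ : ℝ) (hκ : 0 ≤ κ)
    (hH : ∀ η : EuclideanSpace ℂ (Fin n), (R η η η η).re ≤ -κ * ‖η‖ ^ 4)
    (b : Fin n → ℝ) (hb : ∀ i, 0 < b i) :
    -∑ i, ∑ k, (R (EuclideanSpace.single i 1) (EuclideanSpace.single i 1)
          (EuclideanSpace.single k 1) (EuclideanSpace.single k 1)).re / (b i * b k)
      ≥ ((n + 1 : ℝ) * κ / (2 * n)) * (∑ i, 1 / b i) ^ 2 := by
  classical
  set e : Fin n → EuclideanSpace ℂ (Fin n) := fun i => EuclideanSpace.single i 1 with he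
  set t : Fin n → ℝ := fun i => Real.sqrt (b i)⁻¹ with htdef
  have ht2 : ∀ i, t i ^ 2 = (b i)⁻¹ := fun i => Real.sq_sqrt (inv_nonneg.2 (hb i).le)
  set S : ℝ := ∑ i, 1 / b i with hSdef
  have hS : S = ∑ i, (b i)⁻¹ := by rw [hSdef]; exact Finset.sum_congr rfl fun i _ => one_div _
  have hSpos : 0 < S := by
    rw [hS]; exact Finset.sum_pos (fun i _ => inv_pos.2 (hb i)) ⟨⟨0, hn⟩, Finset.mem_univ _⟩
  -- the vectors and their norms
  set x : (Fin n → Fin 4) → EuclideanSpace ℂ (Fin n) :=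
    fun θ => ∑ i, (((t i : ℝ) : ℂ) * ω4 (θ i)) • e i with hxdef
  have hcoord : ∀ θ j, x θ j = ((t j : ℝ) : ℂ) * ω4 (θ j) := by
    intro θ j
    rw [hxdef]
    show (∑ i, (((t i : ℝ) : ℂ) * ω4 (θ i)) • e i) j = _
    rw [euclidean_sum_apply]
    simp only [PiLp.smul_apply, he, EuclideanSpace.single_apply,
      smul_eq_mul, mul_ite, mul_one, mul_zero]
    rw [Finset.sum_ite_eq]
    simp
  have hnorm : ∀ θ, ‖x θ‖ ^ 2 = S := by
    intro θ
    rw [EuclideanSpace.norm_eq, Real.sq_sqrt (Finset.sum_nonneg fun i _ => sq_nonneg _), hS]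
    refine Finset.sum_congr rfl fun j _ => ?_
    rw [hcoord θ j, norm_mul, ω4_norm, mul_one, Complex.norm_real,
      Real.norm_eq_abs, sq_abs, ht2]
  -- sum of the sectional curvature bounds over all sign choices
  have hsum_le : (∑ θ : Fin n → Fin 4, (R (x θ) (x θ) (x θ) (x θ)).re)
      ≤ (4:ℝ) ^ n * (-κ * S ^ 2) := by
    calc (∑ θ : Fin n → Fin 4, (R (x θ) (x θ) (x θ) (x θ)).re)
        ≤ ∑ θ : Fin n → Fin 4, (-κ * S ^ 2) := by
          refine Finset.sum_le_sum fun θ _ => ?_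
          have := hH (x θ)
          have h4 : ‖x θ‖ ^ 4 = S ^ 2 := by
            have : ‖x θ‖ ^ 4 = (‖x θ‖ ^ 2) ^ 2 := by ring
            rw [this, hnorm θ]
          rwa [h4] at this
      _ = (4:ℝ) ^ n * (-κ * S ^ 2) := by
          rw [Finset.sum_const, Finset.card_univ, Fintype.card_fun]
          simp [mul_comm]
  -- the key algebraic identity (real part)
  set W : ℝ := ∑ i, ∑ k, (t i ^ 2 * t k ^ 2) * (R (e i) (e i) (e k) (e k)).re with hWdef
  set D : ℝ := ∑ i, (t i ^ 4) * (R (e i) (e i) (e i) (e i)).re with hDdef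
  have hre : (∑ θ : Fin n → Fin 4, (R (x θ) (x θ) (x θ) (x θ)).re)
      = (4:ℝ) ^ n * (2 * W - D) := by
    have hkey := royden_key R hlin1 hlin3 hconj2 hconj4 hsym13 t e
    have hc := congrArg Complex.re hkey
    rw [Complex.re_sum] at hc
    have h4c : ((4:ℂ) ^ n) = (((4:ℝ) ^ n : ℝ) : ℂ) := by push_cast; ring
    rw [h4c, Complex.re_ofReal_mul, Complex.sub_re] at hc
    have h2c : ((2:ℂ) * ∑ i, ∑ k, ((t i ^ 2 * t k ^ 2 : ℝ) : ℂ) * R (e i) (e i) (e k) (e k)).re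
        = 2 * W := by
      have : (2:ℂ) = ((2:ℝ) : ℂ) := by norm_num
      rw [this, Complex.re_ofReal_mul, Complex.re_sum, hWdef]
      refine congrArg _ (Finset.sum_congr rfl fun i _ => ?_)
      rw [Complex.re_sum]
      exact Finset.sum_congr rfl fun k _ => Complex.re_ofReal_mul _ _
    have hdc : ((∑ i, ((t i ^ 4 : ℝ) : ℂ) * R (e i) (e i) (e i) (e i)).re) = D := by
      rw [Complex.re_sum, hDdef]
      exact Finset.sum_congr rfl fun i _ => Complex.re_ofReal_mul _ _
    rw [h2c, hdc] at hc
    exact hc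
  -- main inequality
  have hmain : 2 * W - D ≤ -κ * S ^ 2 := by
    have h4pos : (0:ℝ) < (4:ℝ) ^ n := by positivity
    have := hre ▸ hsum_le
    exact le_of_mul_le_mul_left this h4pos
  -- diagonal bound
  have hdiag : ∀ i, (R (e i) (e i) (e i) (e i)).re ≤ -κ := by
    intro i
    have := hH (e i)
    have h1 : ‖e i‖ = 1 := by rw [he]; simp [EuclideanSpace.norm_single]
    rwa [h1, one_pow, mul_one] at this
  have hD : D ≤ -κ * ∑ i, ((b i)⁻¹) ^ 2 := by
    rw [hDdef, Finset.mul_sum]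
    refine Finset.sum_le_sum fun i _ => ?_
    have ht4 : t i ^ 4 = ((b i)⁻¹) ^ 2 := by
      have : t i ^ 4 = (t i ^ 2) ^ 2 := by ring
      rw [this, ht2]
    rw [ht4]
    have h0 : (0:ℝ) ≤ ((b i)⁻¹) ^ 2 := sq_nonneg _
    calc ((b i)⁻¹) ^ 2 * (R (e i) (e i) (e i) (e i)).re
        ≤ ((b i)⁻¹) ^ 2 * (-κ) := mul_le_mul_of_nonneg_left (hdiag i) h0
      _ = -κ * ((b i)⁻¹) ^ 2 := by ring
  -- Cauchy–Schwarz
  have hcs : S ^ 2 ≤ (n : ℝ) * ∑ i, ((b i)⁻¹) ^ 2 := by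
    rw [hS]
    have := sq_sum_le_card_mul_sum_sq (s := (Finset.univ : Finset (Fin n)))
      (f := fun i => (b i)⁻¹)
    simpa using this
  -- rewrite the goal
  have hgoal : (∑ i, ∑ k, (R (e i) (e i) (e k) (e k)).re / (b i * b k)) = W := by
    rw [hWdef]
    refine Finset.sum_congr rfl fun i _ => Finset.sum_congr rfl fun k _ => ?_
    rw [ht2, ht2, div_eq_mul_inv, mul_inv]
    ring
  rw [ge_iff_le]
  show ((n:ℝ) + 1) * κ / (2 * (n:ℝ)) * S ^ 2 ≤
    -∑ i, ∑ k, (R (e i) (e i) (e k) (e k)).re / (b i * b k)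
  rw [hgoal]
  have hn1 : (1:ℝ) ≤ (n:ℝ) := by exact_mod_cast hn
  have hnpos : (0:ℝ) < 2 * n := by linarith
  rw [div_mul_eq_mul_div, div_le_iff₀ hnpos]
  have hk1 : κ * S ^ 2 ≤ κ * ((n:ℝ) * ∑ i, ((b i)⁻¹) ^ 2) := mul_le_mul_of_nonneg_left hcs hκ
  have hk2 : (n:ℝ) * (2 * W - D) ≤ (n:ℝ) * (-κ * S ^ 2) :=
    mul_le_mul_of_nonneg_left hmain (by linarith)
  have hk3 : (n:ℝ) * D ≤ (n:ℝ) * (-κ * ∑ i, ((b i)⁻¹) ^ 2) :=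
    mul_le_mul_of_nonneg_left hD (by linarith)
  nlinarith [hk1, hk2, hk3]
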